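/- arXiv:0804.4410 — 5 statements merged into one kernel-verified Lean document; each statement's English description precedes it below -/
import Mathlib

section
/- Let k be a finite field, r ∈ k^× a nonzero element, and w ∈ F_k a word of length l. Then w ∈ A_r if and only if for every α ∈ k the word wα (w with α appended on the right) lies in C_r. Moreover, if w ∈ C_r, then there exists a unique α ∈ k such that wα ∈ A_r. -/
/-- The monoid homomorphism π sending a word α₁…α_l over k to the matrix product
[[0,1],[−1,α₁]] ⋯ [[0,1],[−1,α_l]]. -/
def piWord {k : Type*} [Field k] (w : List k) : Matrix (Fin 2) (Fin 2) k :=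
  (w.map fun α => !![0, 1; -1, α]).prod

/-- A_r : words w with π(w) = [[a,b],[c,d]] satisfying d = b·r and b ≠ 0. -/
def Ar {k : Type*} [Field k] (r : k) : Set (List k) :=
  {w | piWord w 1 1 = piWord w 0 1 * r ∧ piWord w 0 1 ≠ 0}

lemma piWord_append {k : Type*} [Field k] (w : List k) (α : k) :
    piWord (w ++ [α]) = piWord w * !![0, 1; -1, α] := by
  simp [piWord]

lemma det_piWord {k : Type*} [Field k] (w : List k) :
    piWord w 0 0 * piWord w 1 1 - piWord w 0 1 * piWord w 1 0 = 1 := by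
  have h : (piWord w).det = 1 := by
    induction w with
    | nil => simp [piWord]
    | cons x xs ih =>
      have hx : piWord (x :: xs) = !![0, 1; -1, x] * piWord xs := by
        simp [piWord]
      rw [hx, Matrix.det_mul, ih, mul_one]
      simp [Matrix.det_fin_two_of]
  rw [Matrix.det_fin_two] at h
  linear_combination h

theorem stmt1 {k : Type*} [Field k] [Fintype k] (r : k) (hr : r ≠ 0)
    (l : ℕ) (w : List k) (hw : w.length = l) :
    (w ∈ Ar r ↔ ∀ α : k, w ++ [α] ∉ Ar r) ∧
    (w ∉ Ar r → ∃! α : k, w ++ [α] ∈ Ar r) := by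
  set a := piWord w 0 0 with ha
  set b := piWord w 0 1 with hb
  set c := piWord w 1 0 with hc
  set d := piWord w 1 1 with hd
  have hdet : a * d - b * c = 1 := det_piWord w
  have hmemA : w ∈ Ar r ↔ (d = b * r ∧ b ≠ 0) := Iff.rfl
  have hentry : ∀ α : k, piWord (w ++ [α]) 0 1 = a + b * α ∧
      piWord (w ++ [α]) 1 1 = c + d * α := by
    intro α
    rw [piWord_append]
    constructor <;>
      simp [Matrix.mul_apply, Fin.sum_univ_two, ha, hb, hc, hd] <;> ring
  have claim : ∀ α : k, (w ++ [α] ∈ Ar r ↔ (d - b * r) * α = a * r - c) := by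
    intro α
    obtain ⟨h1, h2⟩ := hentry α
    constructor
    · rintro ⟨he, hne⟩
      rw [h1, h2] at he
      linear_combination he
    · intro h
      have he : piWord (w ++ [α]) 1 1 = piWord (w ++ [α]) 0 1 * r := by
        rw [h1, h2]; linear_combination h
      refine ⟨he, ?_⟩
      rw [h1]
      intro hz
      have he' : c + d * α = (a + b * α) * r := by rw [← h1, ← h2]; exact he
      have hc0 : c + d * α = 0 := by linear_combination he' + r * hz
      have : (1 : k) = 0 := by linear_combination d * hz - b * hc0 - hdet
      exact one_ne_zero this
  have part2 : w ∉ Ar r → ∃! α : k, w ++ [α] ∈ Ar r := by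
    intro hA
    rw [hmemA] at hA
    have hne : d - b * r ≠ 0 := by
      intro h0
      have hdbr : d = b * r := by linear_combination h0
      by_cases hbz : b = 0
      · rw [hbz] at hdbr
        rw [hbz, hdbr] at hdet
        simp at hdet
      · exact hA ⟨hdbr, hbz⟩
    refine ⟨(a * r - c) / (d - b * r), ?_, ?_⟩
    · show w ++ _ ∈ Ar r
      rw [claim]; field_simp
    · intro y hy
      rw [claim] at hy
      rw [eq_div_iff hne]
      linear_combination hy
  refine ⟨⟨?_, ?_⟩, part2⟩
  · rintro ⟨hdbr0, hbz⟩ α hα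
    have hdbr : d = b * r := hdbr0
    rw [claim] at hα
    have hb1 : b * (a * r - c) = 1 := by linear_combination hdet - a * hdbr
    have h0 : a * r - c = 0 := by linear_combination α * hdbr - hα
    rw [h0, mul_zero] at hb1
    exact zero_ne_one hb1
  · intro hall
    by_contra hA
    obtain ⟨α, hα, -⟩ := part2 hA
    exact hall α hα
end

section
/- Let k be a finite field, r ∈ k^× a nonzero element, and w ∈ F_k a word with π(w) = [[a,b],[c,d]]. (i) If w ∈ C_r, then d = 0 if and only if for every α ∈ k the word αw (α prepended on the left) lies in C_r. (ii) If w ∈ A_r, then there exists a unique α ∈ k (namely α = r + r⁻¹) such that αw ∈ A_r. -/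
theorem stmt2 {k : Type*} [Field k] [Fintype k] (r : k) (hr : r ≠ 0)
    (w : List k) (a b c d : k) (hw : piWord w = !![a, b; c, d]) :
    (w ∉ Ar r → (d = 0 ↔ ∀ α : k, α :: w ∉ Ar r)) ∧
    (w ∈ Ar r → ∀ α : k, α :: w ∈ Ar r ↔ α = r + r⁻¹) := by
  have hcons : ∀ α : k, piWord (α :: w) = !![c, d; -a + α*c, -b + α*d] := by
    intro α
    have h : piWord (α :: w) = !![0,1;-1,α] * piWord w := by
      simp [piWord]
    rw [h, hw, Matrix.mul_fin_two]
    norm_num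
  have hmem : ∀ α : k, (α :: w ∈ Ar r ↔ (-b + α*d = d * r ∧ d ≠ 0)) := by
    intro α
    simp [Ar, hcons α]
  have hb : piWord w 0 1 = b := by rw [hw]; simp
  have hd : piWord w 1 1 = d := by rw [hw]; simp
  constructor
  · intro _
    constructor
    · intro h0 α hα
      exact ((hmem α).1 hα).2 h0
    · intro hall
      by_contra hdne
      exact hall (r + b/d) ((hmem _).2 ⟨by field_simp; ring, hdne⟩)
  · intro hA α
    obtain ⟨h1, h2⟩ := hA
    rw [hb] at h2; rw [hb, hd] at h1
    rw [hmem α]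
    have hdne : d ≠ 0 := by rw [h1]; exact mul_ne_zero h2 hr
    constructor
    · rintro ⟨he, -⟩
      rw [h1] at he
      have he' : b * (α * r) = b * (r * r + 1) := by linear_combination he
      have he2 := mul_left_cancel₀ h2 he'
      field_simp
      linear_combination he2
    · rintro rfl
      refine ⟨?_, hdne⟩
      rw [h1]; field_simp; ring
end

section
/- Let k be a finite field with q elements, r ∈ k, and l ≥ 0 an integer. Then |A_r^l| = (q^l − (−1)^l)/(q+1) and |C_r^l| = (q^{l+1} + (−1)^l)/(q+1). -/
/-- Number of words of length l lying in A_r. -/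
noncomputable def cardArl {k : Type*} [Field k] (r : k) (l : ℕ) : ℕ :=
  Nat.card {w : List k // w.length = l ∧ w ∈ Ar r}

/-- Number of words of length l lying in C_r = F_k ∖ A_r. -/
noncomputable def cardCrl {k : Type*} [Field k] (r : k) (l : ℕ) : ℕ :=
  Nat.card {w : List k // w.length = l ∧ w ∉ Ar r}

open scoped Classical

section Aux

set_option linter.unusedSectionVars false

variable {k : Type*} [Field k]

lemma piWord_cons (α : k) (w : List k) :
    piWord (α :: w) = !![0, 1; -1, α] * piWord w := by
  simp [piWord]

lemma piWord_cons01 (α : k) (w : List k) :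
    piWord (α :: w) 0 1 = piWord w 1 1 := by
  simp [piWord_cons, Matrix.mul_apply, Fin.sum_univ_two]

lemma piWord_cons11 (α : k) (w : List k) :
    piWord (α :: w) 1 1 = α * piWord w 1 1 - piWord w 0 1 := by
  simp [piWord_cons, Matrix.mul_apply, Fin.sum_univ_two]; ring

lemma piWord_det (w : List k) : (piWord w).det = 1 := by
  induction w with
  | nil => simp [piWord]
  | cons α w ih => rw [piWord_cons, Matrix.det_mul, ih, mul_one]
                   simp [Matrix.det_fin_two_of]

lemma piWord_col (w : List k) (h : piWord w 1 1 = 0) : piWord w 0 1 ≠ 0 := by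
  intro hb
  have := piWord_det w
  rw [Matrix.det_fin_two, h, hb] at this
  simp at this

variable [Fintype k]

noncomputable instance instFVl (l : ℕ) : Fintype {w : List k // w.length = l} :=
  show Fintype (List.Vector k l) from inferInstance

lemma card_Vl (l : ℕ) : Fintype.card {w : List k // w.length = l} = Fintype.card k ^ l := by
  rw [show Fintype.card {w : List k // w.length = l}
      = Fintype.card (List.Vector k l) from rfl]
  exact card_vector l

lemma card_len (P : List k → Prop) (l : ℕ) :
    Nat.card {w : List k // w.length = l ∧ P w} =
    Fintype.card {v : {w : List k // w.length = l} // P v.1} := by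
  rw [← Nat.card_eq_fintype_card]
  exact Nat.card_congr (Equiv.subtypeSubtypeEquivSubtypeInter
    (fun w : List k => w.length = l) P).symm

lemma card_compl (P : List k → Prop) (l : ℕ) :
    Nat.card {w : List k // w.length = l ∧ P w} +
    Nat.card {w : List k // w.length = l ∧ ¬ P w} = Fintype.card k ^ l := by
  rw [card_len, card_len, ← card_Vl l]
  have := Fintype.card_congr
    (Equiv.sumCompl (fun v : {w : List k // w.length = l} => P v.1))
  rw [Fintype.card_sum] at this
  convert this using 3 <;> exact Subsingleton.elim _ _

def consEquiv (P : List k → Prop) (l : ℕ) :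
    {w : List k // w.length = l + 1 ∧ P w} ≃
    Σ v : {w : List k // w.length = l}, {α : k // P (α :: v.1)} where
  toFun := fun x => match x with
    | ⟨α :: t, ⟨hl, hP⟩⟩ => ⟨⟨t, by simpa using hl⟩, α, hP⟩
  invFun := fun x => match x with
    | ⟨⟨t, ht⟩, α, hα⟩ => ⟨α :: t, by simp [ht], hα⟩
  left_inv := fun x => match x with
    | ⟨α :: t, ⟨hl, hP⟩⟩ => rfl
  right_inv := fun x => match x with
    | ⟨⟨t, ht⟩, α, hα⟩ => rfl

lemma card_succ (P : List k → Prop) (l : ℕ) :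
    Nat.card {w : List k // w.length = l + 1 ∧ P w} =
    ∑ v : {w : List k // w.length = l}, Nat.card {α : k // P (α :: v.1)} := by
  rw [Nat.card_congr (consEquiv P l), Nat.card_eq_fintype_card, Fintype.card_sigma]
  simp [Nat.card_eq_fintype_card]

lemma fiber_card (r : k) (w : List k) :
    Nat.card {α : k // (α :: w) ∈ Ar r} =
    if piWord w 1 1 ≠ 0 then 1 else 0 := by
  have hmem : ∀ α : k, (α :: w) ∈ Ar r ↔
      (α * piWord w 1 1 - piWord w 0 1 = piWord w 1 1 * r ∧ piWord w 1 1 ≠ 0) := by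
    intro α
    rw [Ar, Set.mem_setOf_eq, piWord_cons01, piWord_cons11]
  by_cases hd : piWord w 1 1 = 0
  · simp only [hd, ne_eq, not_true_eq_false, if_false]
    have : IsEmpty {α : k // (α :: w) ∈ Ar r} := by
      refine ⟨fun x => ?_⟩
      have := (hmem x.1).mp x.2
      exact this.2 hd
    exact Nat.card_of_isEmpty
  · simp only [hd, ne_eq, not_false_eq_true, if_true]
    have h2 : ∀ α : k, (α :: w) ∈ Ar r ↔
        α = (piWord w 1 1 * r + piWord w 0 1) / piWord w 1 1 := by
      intro α
      rw [hmem α, eq_div_iff hd]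
      constructor
      · rintro ⟨h, -⟩; linear_combination h
      · intro h; exact ⟨by linear_combination h, hd⟩
    rw [Nat.card_congr (Equiv.subtypeEquivRight h2), Nat.card_eq_fintype_card]
    exact Fintype.card_subtype_eq _

lemma S1 (r : k) (l : ℕ) :
    cardArl r (l + 1) =
    Nat.card {w : List k // w.length = l ∧ piWord w 1 1 ≠ 0} := by
  rw [cardArl, card_succ (· ∈ Ar r) l, card_len]
  have h : (∑ v : {w : List k // w.length = l}, Nat.card {α : k // (α :: v.1) ∈ Ar r})
      = ∑ v : {w : List k // w.length = l}, if piWord v.1 1 1 ≠ 0 then 1 else 0 :=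
    Finset.sum_congr rfl fun v _ => fiber_card r v.1
  rw [h, ← Finset.card_filter, ← Fintype.card_subtype]
  congr 1
  · exact Subsingleton.elim _ _

lemma S2 (l : ℕ) :
    Nat.card {w : List k // w.length = l ∧ piWord w 1 1 ≠ 0} + cardArl (0 : k) l
      = Fintype.card k ^ l := by
  have h := card_compl (fun w : List k => piWord w 1 1 ≠ 0) l
  rw [cardArl]
  have e : Nat.card {w : List k // w.length = l ∧ ¬ piWord w 1 1 ≠ 0}
      = Nat.card {w : List k // w.length = l ∧ w ∈ Ar 0} := by
    refine Nat.card_congr (Equiv.subtypeEquivRight fun w => ?_)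
    rw [not_not]
    constructor
    · rintro ⟨hl, hd⟩
      exact ⟨hl, by rw [hd, mul_zero], piWord_col w hd⟩
    · rintro ⟨hl, hd, -⟩
      exact ⟨hl, by rw [hd, mul_zero]⟩
  rw [← e, h]

lemma S3 (r : k) (l : ℕ) :
    cardArl r l + cardCrl r l = Fintype.card k ^ l :=
  card_compl (· ∈ Ar r) l

lemma cardArl_zero (r : k) : cardArl r 0 = 0 := by
  rw [cardArl]
  have : IsEmpty {w : List k // w.length = 0 ∧ w ∈ Ar r} := by
    refine ⟨fun x => ?_⟩
    obtain ⟨w, hl, hm⟩ := x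
    rw [List.length_eq_zero_iff] at hl
    subst hl
    exact hm.2 (by simp [piWord, Matrix.one_apply])
  exact Nat.card_of_isEmpty

lemma key (l : ℕ) : ∀ r : k, (cardArl r l : ℤ) * ((Fintype.card k : ℤ) + 1)
    = (Fintype.card k : ℤ) ^ l - (-1) ^ l := by
  induction l with
  | zero => intro r; simp [cardArl_zero]
  | succ l ih =>
    intro r
    have h1 : (cardArl r (l + 1) : ℤ) + cardArl (0 : k) l = (Fintype.card k : ℤ) ^ l := by
      have := S2 (k := k) l
      rw [← S1 r l] at this
      exact_mod_cast congrArg (Nat.cast : ℕ → ℤ) this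
    have ih0 := ih (0 : k)
    rw [pow_succ, pow_succ]
    linear_combination ((Fintype.card k : ℤ) + 1) * h1 - ih0

lemma keyC (r : k) (l : ℕ) : (cardCrl r l : ℤ) * ((Fintype.card k : ℤ) + 1)
    = (Fintype.card k : ℤ) ^ (l + 1) + (-1) ^ l := by
  have h := S3 r l
  have h' : (cardArl r l : ℤ) + cardCrl r l = (Fintype.card k : ℤ) ^ l := by
    exact_mod_cast congrArg (Nat.cast : ℕ → ℤ) h
  have hk := key l r
  rw [pow_succ]
  linear_combination ((Fintype.card k : ℤ) + 1) * h' - hk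

end Aux

theorem stmt5 {k : Type*} [Field k] [Fintype k] (r : k) (l : ℕ) :
    (cardArl r l : ℤ) = ((Fintype.card k : ℤ) ^ l - (-1) ^ l) / (Fintype.card k + 1) ∧
    (cardCrl r l : ℤ) = ((Fintype.card k : ℤ) ^ (l + 1) + (-1) ^ l) / (Fintype.card k + 1) := by
  have hne : ((Fintype.card k : ℤ) + 1) ≠ 0 := by positivity
  constructor
  · rw [← key l r, Int.mul_ediv_cancel _ hne]
  · rw [← keyC r l, Int.mul_ediv_cancel _ hne]
end

section
/- Let k be a finite field, r ∈ k, x ∈ F_k a word, and β ∈ k. Then the word rβx (the letters r and β prepended to x) lies in A_r if and only if x lies in A_0. -/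
theorem stmt7 {k : Type*} [Field k] [Fintype k] (r : k) (x : List k) (β : k) :
    r :: β :: x ∈ Ar r ↔ x ∈ Ar (0 : k) := by
  have hb : piWord (r :: β :: x) 0 1 = -(piWord x 0 1) + β * piWord x 1 1 := by
    simp [piWord, Matrix.mul_apply, Matrix.vecMul, dotProduct, Fin.sum_univ_two]
  have hd : piWord (r :: β :: x) 1 1
      = -(piWord x 1 1) + r * (-(piWord x 0 1) + β * piWord x 1 1) := by
    simp [piWord, Matrix.mul_apply, Matrix.vecMul, dotProduct, Fin.sum_univ_two]
  simp only [Ar, Set.mem_setOf_eq, hb, hd, mul_zero]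
  constructor
  · rintro ⟨h1, h2⟩
    have hP : piWord x 1 1 = 0 := by linear_combination -h1
    refine ⟨hP, ?_⟩
    intro hb0
    apply h2
    rw [hb0, hP]; ring
  · rintro ⟨h1, h2⟩
    rw [h1]
    constructor
    · ring
    · simpa using h2
end

section
/- Let N be a positive integer. The set S' = { [[0,1],[−1,α]] : α ∈ ℤ/Nℤ } generates SL₂(ℤ/Nℤ) as a semigroup; that is, every element of SL₂(ℤ/Nℤ) can be written as a product of a nonempty finite sequence of matrices of the form [[0,1],[−1,α]] with α ∈ ℤ/Nℤ. -/
/-- The matrix [[0,1],[−1,α]] as an element of SL₂(ℤ/Nℤ). -/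
def genMat (N : ℕ) (α : ZMod N) : Matrix.SpecialLinearGroup (Fin 2) (ZMod N) :=
  ⟨!![0, 1; -1, α], by simp [Matrix.det_fin_two_of]⟩

namespace Stmt8aux
variable (N : ℕ)

def Tm (β : ZMod N) : Matrix.SpecialLinearGroup (Fin 2) (ZMod N) :=
  ⟨!![1, β; 0, 1], by simp [Matrix.det_fin_two_of]⟩

def P (g : Matrix.SpecialLinearGroup (Fin 2) (ZMod N)) : Prop :=
  ∃ l : List (ZMod N), l ≠ [] ∧ (l.map (genMat N)).prod = g

variable {N}

theorem genMat_coe (α : ZMod N) :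
    ((genMat N α : Matrix.SpecialLinearGroup (Fin 2) (ZMod N)) :
      Matrix (Fin 2) (Fin 2) (ZMod N)) = !![0, 1; -1, α] := rfl

theorem Tm_coe (β : ZMod N) :
    ((Tm N β : Matrix.SpecialLinearGroup (Fin 2) (ZMod N)) :
      Matrix (Fin 2) (Fin 2) (ZMod N)) = !![1, β; 0, 1] := rfl

theorem P.mul {g h} (hg : P N g) (hh : P N h) : P N (g * h) := by
  obtain ⟨l1, h1, e1⟩ := hg
  obtain ⟨l2, h2, e2⟩ := hh
  exact ⟨l1 ++ l2, by simp [h1], by simp [e1, e2]⟩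

theorem P.gen (α : ZMod N) : P N (genMat N α) := ⟨[α], by simp, by simp⟩

theorem Tm_mul (β γ : ZMod N) : Tm N β * Tm N γ = Tm N (β + γ) := by
  ext i j
  simp [Matrix.SpecialLinearGroup.coe_mul, Tm_coe, Matrix.mul_fin_two, add_comm]

theorem Tm_zero : Tm N 0 = 1 := by
  ext i j
  simp [Tm, Matrix.one_fin_two]

theorem hS4 : genMat N 0 ^ 4 = 1 := by
  ext i j
  simp [Matrix.SpecialLinearGroup.coe_pow, genMat_coe, pow_succ, Matrix.mul_fin_two, Matrix.one_fin_two]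

theorem hS3 : ((genMat N 0 ^ 3 : Matrix.SpecialLinearGroup (Fin 2) (ZMod N)) :
    Matrix (Fin 2) (Fin 2) (ZMod N)) = !![0, -1; 1, 0] := by
  simp [Matrix.SpecialLinearGroup.coe_pow, genMat_coe, pow_succ, Matrix.mul_fin_two]

theorem hT (β : ZMod N) : Tm N β = genMat N 0 ^ 3 * genMat N (-β) := by
  ext i j
  simp [Matrix.SpecialLinearGroup.coe_mul, Matrix.SpecialLinearGroup.coe_pow, genMat_coe, Tm_coe, pow_succ, Matrix.mul_fin_two]

theorem P.S3 : P N (genMat N 0 ^ 3) := by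
  rw [pow_succ, pow_succ, pow_one]
  exact ((P.gen 0).mul (P.gen 0)).mul (P.gen 0)

theorem P.T (β : ZMod N) : P N (Tm N β) := by
  rw [hT]
  exact P.S3.mul (P.gen (-β))

/-- Base case: upper triangular matrices. -/
theorem base (a b d : ZMod N) (had : a * d = 1)
    (g : Matrix.SpecialLinearGroup (Fin 2) (ZMod N))
    (hg : (g : Matrix (Fin 2) (Fin 2) (ZMod N)) = !![a, b; 0, d]) : P N g := by
  have key : g = Tm N a * (genMat N (-d) * genMat N 0 ^ 3) * Tm N a * genMat N 0 ^ 3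
      * Tm N (d * b) := by
    apply Subtype.ext
    rw [hg]
    show _ = (_ : Matrix (Fin 2) (Fin 2) (ZMod N))
    simp only [Matrix.SpecialLinearGroup.coe_mul, Matrix.SpecialLinearGroup.coe_pow]
    push_cast [Tm_coe, genMat_coe, pow_succ]
    simp [Matrix.mul_fin_two]
    refine ⟨⟨?_, ?_⟩, ?_, ?_⟩
    · linear_combination (-a)*had
    · linear_combination (a*b*d - b - 1)*had
    · linear_combination had
    · linear_combination (-(d*b))*had
  rw [key]
  exact ((((P.T a).mul ((P.gen (-d)).mul P.S3)).mul (P.T a)).mul P.S3).mul (P.T (d * b))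

theorem gfact (q : ZMod N) (g : Matrix.SpecialLinearGroup (Fin 2) (ZMod N)) :
    g = Tm N q * genMat N 0 * (genMat N 0 ^ 3 * Tm N (-q) * g) := by
  have e1 : genMat N 0 * genMat N 0 ^ 3 = 1 := by rw [← pow_succ']; exact hS4
  symm
  calc Tm N q * genMat N 0 * (genMat N 0 ^ 3 * Tm N (-q) * g)
      = Tm N q * (genMat N 0 * genMat N 0 ^ 3) * (Tm N (-q) * g) := by
        simp only [mul_assoc]
    _ = g := by rw [e1, mul_one, ← mul_assoc, Tm_mul, add_neg_cancel, Tm_zero, one_mul]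

theorem hent (q : ZMod N) (g : Matrix.SpecialLinearGroup (Fin 2) (ZMod N)) :
    ((genMat N 0 ^ 3 * Tm N (-q) * g : Matrix.SpecialLinearGroup (Fin 2) (ZMod N)) :
      Matrix (Fin 2) (Fin 2) (ZMod N)) 1 0
    = (g : Matrix (Fin 2) (Fin 2) (ZMod N)) 0 0
      - q * (g : Matrix (Fin 2) (Fin 2) (ZMod N)) 1 0 := by
  rw [Matrix.SpecialLinearGroup.coe_mul, Matrix.SpecialLinearGroup.coe_mul, hS3]
  simp [Tm, Matrix.mul_fin_two, Matrix.mul_apply, Fin.sum_univ_two]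
  ring

end Stmt8aux

theorem stmt8 (N : ℕ) (hN : 0 < N) (g : Matrix.SpecialLinearGroup (Fin 2) (ZMod N)) :
    ∃ l : List (ZMod N), l ≠ [] ∧ (l.map (genMat N)).prod = g := by
  haveI : NeZero N := ⟨hN.ne'⟩
  suffices H : ∀ n (g : Matrix.SpecialLinearGroup (Fin 2) (ZMod N)),
      ((g : Matrix (Fin 2) (Fin 2) (ZMod N)) 1 0).val = n → Stmt8aux.P N g from H _ g rfl
  intro n
  induction n using Nat.strong_induction_on with
  | _ n ih =>
    intro g hg
    by_cases hc : (g : Matrix (Fin 2) (Fin 2) (ZMod N)) 1 0 = 0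
    · have hd := g.prop
      rw [Matrix.det_fin_two] at hd
      refine Stmt8aux.base ((g : Matrix (Fin 2) (Fin 2) (ZMod N)) 0 0)
        ((g : Matrix (Fin 2) (Fin 2) (ZMod N)) 0 1)
        ((g : Matrix (Fin 2) (Fin 2) (ZMod N)) 1 1) ?_ g ?_
      · rw [hc] at hd; linear_combination hd
      · rw [Matrix.eta_fin_two (g : Matrix (Fin 2) (Fin 2) (ZMod N)), hc]; simp
    · set a := (g : Matrix (Fin 2) (Fin 2) (ZMod N)) 0 0 with ha
      set c := (g : Matrix (Fin 2) (Fin 2) (ZMod N)) 1 0 with hcdef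
      have hcv : 0 < c.val := by
        rcases Nat.eq_zero_or_pos c.val with h0 | h0
        · exact absurd (by simpa [ZMod.val_eq_zero] using h0) hc
        · exact h0
      set q : ℕ := a.val / c.val with hq
      set h := genMat N 0 ^ 3 * Stmt8aux.Tm N (-(q : ZMod N)) * g with hh
      have hsub : a - (q : ZMod N) * c = ((a.val % c.val : ℕ) : ZMod N) := by
        have hdm : c.val * q + a.val % c.val = a.val := Nat.div_add_mod a.val c.val
        have : ((c.val * q + a.val % c.val : ℕ) : ZMod N) = ((a.val : ℕ) : ZMod N) := by
          rw [hdm]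
        push_cast at this
        simp only [ZMod.natCast_val, ZMod.cast_id] at this
        linear_combination -this
      have hval : ((h : Matrix (Fin 2) (Fin 2) (ZMod N)) 1 0).val = a.val % c.val := by
        rw [hh, Stmt8aux.hent, hsub]
        exact ZMod.val_cast_of_lt (lt_of_lt_of_le (Nat.mod_lt _ hcv) (le_of_lt (ZMod.val_lt c)))
      have Ph : Stmt8aux.P N h := by
        refine ih _ ?_ h hval
        rw [← hg]
        exact Nat.mod_lt _ hcv
      have := Stmt8aux.gfact (N := N) (q : ZMod N) g
      rw [hh] at Ph
      rw [this]
      exact ((Stmt8aux.P.T _).mul (Stmt8aux.P.gen 0)).mul Ph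
end
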